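/- Let k be a positive integer and let f be a rational function on ℂ. If f(z) ≠ 0 for all z ∈ ℂ and f^{(k)}(z) ≠ 0 for all z ∈ ℂ, then there exist a nonzero constant C ∈ ℂ, a point z_1 ∈ ℂ, and a positive integer r such that f(z) = C/(z − z_1)^r for all z ≠ z_1. -/

import Mathlib

open Filter Set Polynomial

lemma fact1 (a : ℂ) (h u : Polynomial ℂ) (s r : ℕ) (c : ℂ) (hr : 1 ≤ r) :
    derivative ((X - Polynomial.C a) ^ s * h) * ((X - Polynomial.C a) ^ r * u)
      - Polynomial.C c * (((X - Polynomial.C a) ^ s * h) * derivative ((X - Polynomial.C a) ^ r * u))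
    = (X - Polynomial.C a) ^ (s + r - 1) *
        (Polynomial.C ((s : ℂ) - c * r) * (h * u)
          + (X - Polynomial.C a) * (derivative h * u - Polynomial.C c * (h * derivative u))) := by
  obtain ⟨r, rfl⟩ := Nat.exists_eq_add_of_le hr
  cases s with
  | zero =>
      simp only [pow_zero, one_mul, derivative_mul, derivative_pow, derivative_X, derivative_C,
        Nat.cast_zero, Nat.add_sub_cancel, map_sub, map_mul, Nat.cast_add, Nat.cast_one,
        sub_zero, mul_one, zero_add, Nat.add_sub_cancel_left, map_zero, zero_mul, mul_zero]
      ring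
  | succ s =>
      simp only [derivative_mul, derivative_pow, derivative_X, derivative_C, map_sub, map_mul,
        Nat.add_sub_cancel, sub_zero, mul_one, Nat.cast_add, Nat.cast_one]
      have e1 : s + 1 + (1 + r) - 1 = s + 1 + r := by omega
      have e2 : 1 + r - 1 = r := by omega
      rw [e1, e2]
      ring

lemma fact2 (a : ℂ) (g q : Polynomial ℂ) (hg : g ≠ 0) (hq : q ≠ 0) (c : ℂ)
    (hroot : q.IsRoot a)
    (hne : (rootMultiplicity a g : ℂ) ≠ c * (rootMultiplicity a q)) :
    (derivative g * q - Polynomial.C c * (g * derivative q)) ≠ 0 ∧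
    rootMultiplicity a (derivative g * q - Polynomial.C c * (g * derivative q))
      = rootMultiplicity a g + rootMultiplicity a q - 1 := by
  set s := rootMultiplicity a g with hs
  set r := rootMultiplicity a q with hr
  have hr1 : 1 ≤ r := (rootMultiplicity_pos hq).2 hroot
  obtain ⟨h, hgh, hh⟩ := g.exists_eq_pow_rootMultiplicity_mul_and_not_dvd hg a
  obtain ⟨u, hqu, hu⟩ := q.exists_eq_pow_rootMultiplicity_mul_and_not_dvd hq a
  rw [dvd_iff_isRoot, IsRoot] at hh hu
  rw [← hs] at hgh; rw [← hr] at hqu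
  have key := fact1 a h u s r c hr1
  rw [← hgh, ← hqu] at key
  set w : Polynomial ℂ := Polynomial.C ((s : ℂ) - c * r) * (h * u)
      + (X - Polynomial.C a) * (derivative h * u - Polynomial.C c * (h * derivative u)) with hw
  have hwa : w.eval a = ((s : ℂ) - c * r) * (h.eval a * u.eval a) := by
    simp [hw]
  have hwa0 : w.eval a ≠ 0 := by
    rw [hwa]
    exact mul_ne_zero (sub_ne_zero.2 hne) (mul_ne_zero hh hu)
  have hw0 : w ≠ 0 := fun h0 => hwa0 (by simp [h0])
  have hE0 : derivative g * q - Polynomial.C c * (g * derivative q) ≠ 0 := by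
    rw [key]
    exact mul_ne_zero (pow_ne_zero _ (X_sub_C_ne_zero a)) hw0
  refine ⟨hE0, ?_⟩
  rw [key, rootMultiplicity_mul (key ▸ hE0), rootMultiplicity_X_sub_C_pow,
    rootMultiplicity_eq_zero hwa0, add_zero]

lemma fact3 (g q : Polynomial ℂ) (hg : g ≠ 0) (hq : q ≠ 0) (c : ℂ)
    (hn1 : 1 ≤ q.natDegree)
    (hne : (g.natDegree : ℂ) ≠ c * (q.natDegree)) :
    (derivative g * q - Polynomial.C c * (g * derivative q)) ≠ 0 ∧
    (derivative g * q - Polynomial.C c * (g * derivative q)).natDegree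
      = g.natDegree + q.natDegree - 1 := by
  set d := g.natDegree with hd
  set n := q.natDegree with hn
  set E := derivative g * q - Polynomial.C c * (g * derivative q) with hE
  have hq'c : (derivative q).coeff (n - 1) = q.leadingCoeff * n := by
    have : n - 1 + 1 = n := by omega
    rw [coeff_derivative, this, Nat.cast_sub hn1]
    simp only [Polynomial.leadingCoeff, ← hn, Nat.cast_one]
    ring
  have hcoeff : E.coeff (d + n - 1) = ((d : ℂ) - c * n) * (g.leadingCoeff * q.leadingCoeff) := by
    have hgq' : (g * derivative q).coeff (d + n - 1) = g.leadingCoeff * (q.leadingCoeff * n) := by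
      have e : d + n - 1 = d + (n - 1) := by omega
      rw [e, coeff_mul_add_eq_of_natDegree_le le_rfl (natDegree_derivative_le q), hq'c]
      rfl
    rcases Nat.eq_zero_or_pos d with hd0 | hd1
    · have hg' : derivative g = 0 := by
        obtain ⟨x, hx⟩ := natDegree_eq_zero.1 hd0
        rw [← hx, derivative_C]
      rw [hE, coeff_sub, hg', zero_mul, coeff_zero, coeff_C_mul, hgq', hd0]
      push_cast
      ring
    · have hg'q : (derivative g * q).coeff (d + n - 1) = (g.leadingCoeff * d) * q.leadingCoeff := by
        have e : d + n - 1 = (d - 1) + n := by omega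
        have e2 : d - 1 + 1 = d := by omega
        rw [e, coeff_mul_add_eq_of_natDegree_le (natDegree_derivative_le g) le_rfl,
          coeff_derivative, e2, Nat.cast_sub hd1]
        simp only [Polynomial.leadingCoeff, ← hd, ← hn, Nat.cast_one]
        ring
      rw [hE, coeff_sub, hg'q, coeff_C_mul, hgq']
      ring
  have hlc : ((d : ℂ) - c * n) * (g.leadingCoeff * q.leadingCoeff) ≠ 0 :=
    mul_ne_zero (sub_ne_zero.2 hne)
      (mul_ne_zero (leadingCoeff_ne_zero.2 hg) (leadingCoeff_ne_zero.2 hq))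
  have hle : d + n - 1 ≤ E.natDegree := le_natDegree_of_ne_zero (hcoeff ▸ hlc)
  have hge : E.natDegree ≤ d + n - 1 := by
    apply (natDegree_sub_le _ _).trans
    apply max_le
    · rcases Nat.eq_zero_or_pos d with hd0 | hd1
      · have hg' : derivative g = 0 := by
          obtain ⟨x, hx⟩ := natDegree_eq_zero.1 hd0
          rw [← hx, derivative_C]
        simp [hg']
      · exact (natDegree_mul_le).trans (by
          have := natDegree_derivative_le g
          omega)
    · calc (Polynomial.C c * (g * derivative q)).natDegree
          ≤ (Polynomial.C c).natDegree + (g * derivative q).natDegree := natDegree_mul_le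
        _ ≤ 0 + (d + (n - 1)) := add_le_add (natDegree_C _).le
            (natDegree_mul_le.trans (add_le_add le_rfl (natDegree_derivative_le q)))
        _ ≤ d + n - 1 := by omega
  have hE0 : E ≠ 0 := fun h0 => hlc (by rw [← hcoeff, h0, coeff_zero])
  exact ⟨hE0, le_antisymm hge hle⟩

lemma fact4 (g q : Polynomial ℂ) (j : ℕ) (F : ℂ → ℂ)
    (hF : ∀ z, q.eval z ≠ 0 → F z = g.eval z / (q.eval z) ^ (j + 1))
    (z₀ : ℂ) (hz : q.eval z₀ ≠ 0) :
    deriv F z₀ = (derivative g * q - Polynomial.C ((j : ℂ) + 1) * (g * derivative q)).eval z₀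
      / (q.eval z₀) ^ (j + 2) := by
  have hopen : IsOpen {z : ℂ | q.eval z ≠ 0} :=
    isOpen_compl_singleton.preimage q.continuous
  have hev : F =ᶠ[nhds z₀] fun z => g.eval z / (q.eval z) ^ (j + 1) :=
    eventually_of_mem (hopen.mem_nhds hz) hF
  rw [hev.deriv_eq]
  have h1 : HasDerivAt (fun z => g.eval z) ((derivative g).eval z₀) z₀ := g.hasDerivAt z₀
  have h2 : HasDerivAt (fun z => (q.eval z) ^ (j + 1))
      (((j + 1 : ℕ) : ℂ) * (q.eval z₀) ^ j * (derivative q).eval z₀) z₀ := by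
    have := (q.hasDerivAt z₀).fun_pow (j + 1)
    simpa using this
  have h3 := h1.fun_div h2 (pow_ne_zero _ hz)
  rw [h3.deriv]
  simp only [eval_sub, eval_mul, eval_C]
  field_simp
  push_cast
  ring

lemma fact0 (m : ℕ) : iteratedDeriv m (fun _ : ℂ => (0 : ℂ)) = fun _ => 0 := by
  induction m with
  | zero => rfl
  | succ m ih => rw [iteratedDeriv_succ, ih]; funext z; simp

/-- A zero-free rational function whose `k`-th derivative is also zero-free
must be of the form `C/(z - z₁)^r`. -/
theorem stmt7
    (k : ℕ) (hk : 0 < k)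
    (f : ℂ → ℂ) (p q : Polynomial ℂ) (hq : q ≠ 0) (hpq : IsCoprime p q)
    (hf : ∀ z : ℂ, q.eval z ≠ 0 → f z = p.eval z / q.eval z)
    (hf0 : ∀ z : ℂ, q.eval z ≠ 0 → f z ≠ 0)
    (hfk : ∀ z : ℂ, q.eval z ≠ 0 → iteratedDeriv k f z ≠ 0) :
    ∃ (C : ℂ) (z₁ : ℂ) (r : ℕ), C ≠ 0 ∧ 0 < r ∧
      ∀ z : ℂ, z ≠ z₁ → f z = C / (z - z₁) ^ r := by
  -- p has no roots, hence is a nonzero constant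
  have hp0 : ∀ z : ℂ, p.eval z ≠ 0 := by
    intro z
    by_cases hqz : q.eval z = 0
    · obtain ⟨a, b, hab⟩ := hpq
      intro hpz
      have h1 := congrArg (Polynomial.eval z) hab
      simp [hqz, hpz] at h1
    · intro hpz
      exact hf0 z hqz (by rw [hf z hqz, hpz, zero_div])
  have hpne : p ≠ 0 := fun h => hp0 0 (by simp [h])
  have hpdeg : p.natDegree = 0 := by
    by_contra hd
    obtain ⟨z, hz⟩ := Complex.exists_root (natDegree_pos_iff_degree_pos.mp (Nat.pos_of_ne_zero hd))
    exact hp0 z hz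
  obtain ⟨C₀, hC₀⟩ := natDegree_eq_zero.1 hpdeg
  have hC₀0 : C₀ ≠ 0 := by
    intro h
    apply hp0 0
    rw [← hC₀, h]
    simp
  set n := q.natDegree with hn
  -- q is nonconstant
  have hn1 : 1 ≤ n := by
    by_contra hcon
    have hq0 : q.natDegree = 0 := by omega
    obtain ⟨c, hc⟩ := natDegree_eq_zero.1 hq0
    have hc0 : c ≠ 0 := by
      intro h0
      apply hq
      rw [← hc, h0]
      simp
    have hqe : ∀ z : ℂ, q.eval z ≠ 0 := by
      intro z
      rw [← hc]
      simpa using hc0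
    have hfc : f = fun _ => C₀ / c := by
      funext z
      rw [hf z (hqe z), ← hC₀, ← hc]
      simp
    apply hfk 0 (hqe 0)
    rw [hfc]
    obtain ⟨k', rfl⟩ : ∃ k', k = k' + 1 := ⟨k - 1, by omega⟩
    rw [iteratedDeriv_succ']
    have : deriv (fun _ : ℂ => C₀ / c) = fun _ : ℂ => (0 : ℂ) := by
      funext z; simp
    rw [this, fact0]
  -- main induction: iteratedDeriv j f = g_j / q^(j+1)
  have key : ∀ j : ℕ, ∃ g : Polynomial ℂ, g ≠ 0 ∧ g.natDegree = j * (n - 1) ∧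
      (∀ a : ℂ, q.IsRoot a → rootMultiplicity a g = j * (rootMultiplicity a q - 1)) ∧
      (∀ z : ℂ, q.eval z ≠ 0 → iteratedDeriv j f z = g.eval z / (q.eval z) ^ (j + 1)) := by
    intro j
    induction j with
    | zero =>
        refine ⟨p, hpne, by simp [hpdeg], fun a _ => by
          simp [rootMultiplicity_eq_zero (hp0 a)], fun z hz => by
          simpa [iteratedDeriv_zero] using hf z hz⟩
    | succ j ih =>
        obtain ⟨g, hg0, hgdeg, hgmult, hgev⟩ := ih
        have hnecast : (g.natDegree : ℂ) ≠ ((j : ℂ) + 1) * (q.natDegree : ℂ) := by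
          have hlt : j * (n - 1) < (j + 1) * n := by
            calc j * (n - 1) ≤ j * n := Nat.mul_le_mul_left _ (by omega)
              _ < j * n + n := by omega
              _ = (j + 1) * n := by ring
          rw [hgdeg, ← hn]
          intro hcast
          rw [show ((j : ℂ) + 1) * (n : ℂ) = (((j + 1) * n : ℕ) : ℂ) by push_cast; ring] at hcast
          exact Nat.ne_of_lt hlt (Nat.cast_injective hcast)
        obtain ⟨hE0, hEdeg⟩ := fact3 g q hg0 hq ((j : ℂ) + 1) hn1 hnecast
        refine ⟨derivative g * q - Polynomial.C ((j : ℂ) + 1) * (g * derivative q), hE0, ?_, ?_, ?_⟩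
        · rw [hEdeg, hgdeg, ← hn]
          obtain ⟨m, hm⟩ : ∃ m, n = m + 1 := ⟨n - 1, by omega⟩
          rw [hm]
          simp only [Nat.add_sub_cancel]
          rw [Nat.add_succ_sub_one, Nat.succ_mul]
        · intro a ha
          have hr1 : 1 ≤ rootMultiplicity a q := (rootMultiplicity_pos hq).2 ha
          have hnecast2 : (rootMultiplicity a g : ℂ) ≠ ((j : ℂ) + 1) * (rootMultiplicity a q : ℂ) := by
            set r := rootMultiplicity a q
            have hlt : j * (r - 1) < (j + 1) * r := by
              calc j * (r - 1) ≤ j * r := Nat.mul_le_mul_left _ (by omega)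
                _ < j * r + r := by omega
                _ = (j + 1) * r := by ring
            rw [hgmult a ha]
            intro hcast
            rw [show ((j : ℂ) + 1) * (r : ℂ) = (((j + 1) * r : ℕ) : ℂ) by push_cast; ring] at hcast
            exact Nat.ne_of_lt hlt (Nat.cast_injective hcast)
          obtain ⟨_, hEmult⟩ := fact2 a g q hg0 hq ((j : ℂ) + 1) ha hnecast2
          rw [hEmult, hgmult a ha]
          set r := rootMultiplicity a q with hrdef
          obtain ⟨m, hm⟩ : ∃ m, r = m + 1 := ⟨r - 1, by omega⟩
          rw [hm]
          simp only [Nat.add_sub_cancel]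
          rw [Nat.add_succ_sub_one, Nat.succ_mul]
        · intro z hz
          rw [iteratedDeriv_succ]
          exact fact4 g q j (iteratedDeriv j f) hgev z hz
  obtain ⟨g, hg0, hgdeg, hgmult, hgev⟩ := key k
  -- roots of g are roots of q
  have hgroots : ∀ z : ℂ, g.IsRoot z → q.IsRoot z := by
    intro z hgz
    by_contra hqz
    apply hfk z hqz
    rw [hgev z hqz, IsRoot.def.1 hgz, zero_div]
  -- q has a root
  obtain ⟨z₁, hz₁⟩ := Complex.exists_root (natDegree_pos_iff_degree_pos.mp hn1)
  -- all roots of q equal z₁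
  have huniq : ∀ z : ℂ, q.IsRoot z → z = z₁ := by
    by_contra hcon
    push_neg at hcon
    obtain ⟨z₂, hz₂, hz₂ne⟩ := hcon
    -- counting roots
    have hcardq : Multiset.card q.roots = n := by
      have := (Splits.natDegree_eq_card_roots (IsAlgClosed.splits (q.map (RingHom.id ℂ))))
      simpa using this.symm
    have hcardg : Multiset.card g.roots = k * (n - 1) := by
      have := (Splits.natDegree_eq_card_roots (IsAlgClosed.splits (g.map (RingHom.id ℂ))))
      simp only [Polynomial.map_id] at this
      rw [← this, hgdeg]
    classical
    have hsub : g.roots.toFinset ⊆ q.roots.toFinset := by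
      intro a ha
      rw [Multiset.mem_toFinset, mem_roots hg0] at ha
      rw [Multiset.mem_toFinset, mem_roots hq]
      exact hgroots a ha
    have hsum1 : ∑ a ∈ q.roots.toFinset, Multiset.count a g.roots = k * (n - 1) := by
      rw [← hcardg, ← Multiset.toFinset_sum_count_eq g.roots]
      exact (Finset.sum_subset hsub (fun a _ hna => by
        rw [Multiset.count_eq_zero]
        exact fun hmem => hna (Multiset.mem_toFinset.2 hmem))).symm
    have hsum2 : ∑ a ∈ q.roots.toFinset, Multiset.count a q.roots = n := by
      rw [Multiset.toFinset_sum_count_eq, hcardq]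
    set m := q.roots.toFinset.card with hm
    have hsum3 : ∑ a ∈ q.roots.toFinset, (Multiset.count a q.roots - 1) + m = n := by
      rw [← hsum2, hm, Finset.card_eq_sum_ones, ← Finset.sum_add_distrib]
      apply Finset.sum_congr rfl
      intro a ha
      have : 1 ≤ Multiset.count a q.roots := by
        rw [Multiset.one_le_count_iff_mem]
        exact Multiset.mem_toFinset.1 ha
      omega
    have hsum4 : k * (∑ a ∈ q.roots.toFinset, (Multiset.count a q.roots - 1)) = k * (n - 1) := by
      rw [Finset.mul_sum, ← hsum1]
      apply Finset.sum_congr rfl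
      intro a ha
      rw [count_roots, count_roots, hgmult a (by
        have := Multiset.mem_toFinset.1 ha
        exact (mem_roots hq).1 this)]
    have heq : ∑ a ∈ q.roots.toFinset, (Multiset.count a q.roots - 1) = n - 1 :=
      Nat.eq_of_mul_eq_mul_left hk hsum4
    have hm2 : 2 ≤ m := by
      have h1 : z₁ ∈ q.roots.toFinset := Multiset.mem_toFinset.2 ((mem_roots hq).2 hz₁)
      have h2 : z₂ ∈ q.roots.toFinset := Multiset.mem_toFinset.2 ((mem_roots hq).2 hz₂)
      exact Finset.one_lt_card.2 ⟨z₂, h2, z₁, h1, hz₂ne⟩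
    omega
  -- q = (X - z₁)^n * C c'
  have hmult : rootMultiplicity z₁ q = n := by
    rw [← count_roots]
    have hcardq : Multiset.card q.roots = n := by
      have := (Splits.natDegree_eq_card_roots (IsAlgClosed.splits (q.map (RingHom.id ℂ))))
      simpa using this.symm
    rw [← hcardq]
    rw [Multiset.count_eq_card]
    intro b hb
    exact (huniq b ((mem_roots hq).1 hb)).symm
  obtain ⟨u, hu⟩ := pow_rootMultiplicity_dvd q z₁
  rw [hmult] at hu
  have hu0 : u ≠ 0 := by
    intro h0
    apply hq
    rw [hu, h0, mul_zero]
  have hudeg : u.natDegree = 0 := by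
    have := congrArg Polynomial.natDegree hu
    rw [natDegree_mul (pow_ne_zero _ (X_sub_C_ne_zero z₁)) hu0, natDegree_pow,
      natDegree_X_sub_C, mul_one] at this
    omega
  obtain ⟨c', hc'⟩ := natDegree_eq_zero.1 hudeg
  have hc'0 : c' ≠ 0 := by
    intro h0
    apply hu0
    rw [← hc', h0]
    simp
  refine ⟨C₀ / c', z₁, n, div_ne_zero hC₀0 hc'0, hn1, fun z hzne => ?_⟩
  have hsub0 : z - z₁ ≠ 0 := sub_ne_zero.2 hzne
  have hqeval : q.eval z = (z - z₁) ^ n * c' := by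
    rw [hu, ← hc']
    simp
  have hqz : q.eval z ≠ 0 := by
    rw [hqeval]
    exact mul_ne_zero (pow_ne_zero _ hsub0) hc'0
  rw [hf z hqz, ← hC₀, hqeval]
  simp only [eval_C]
  rw [div_div, mul_comm c']
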